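/- arXiv:1008.4205 — 5 statements merged into one kernel-verified Lean document; each statement's English description precedes it below -/
import Mathlib

section
/- Let a be a positive integer, let ω = exp(2πi/a) ∈ ℂ, and let s be an integer. Then (1/a)·∑_{k=1}^{a−1} ω^{ks}/(1 − ω^{−k}) = ⌊s/a⌋ − s/a + (a−1)/(2a), where the sum is over k = 1, …, a−1 (and is empty when a = 1). -/
/-- For a positive integer `a`, `ω = exp(2πi/a)`, and an integer `s`,
`(1/a)·∑_{k=1}^{a−1} ω^{ks}/(1 − ω^{−k}) = ⌊s/a⌋ − s/a + (a−1)/(2a)`. -/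
theorem statement0 (a : ℕ) (ha : 0 < a) (s : ℤ) :
    (1 / (a : ℂ)) *
        ∑ k ∈ Finset.Ico 1 a,
          Complex.exp (2 * Real.pi * Complex.I / a) ^ ((k : ℤ) * s) /
            (1 - Complex.exp (2 * Real.pi * Complex.I / a) ^ (-(k : ℤ))) =
      (⌊(s : ℚ) / (a : ℚ)⌋ : ℂ) - (s : ℂ) / (a : ℂ) + ((a : ℂ) - 1) / (2 * (a : ℂ)) := by
  set ω : ℂ := Complex.exp (2 * Real.pi * Complex.I / a) with hωdef
  have hω : IsPrimitiveRoot ω a := Complex.isPrimitiveRoot_exp a ha.ne'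
  have hω0 : ω ≠ 0 := Complex.exp_ne_zero _
  have hωa : ω ^ (a : ℤ) = 1 := by rw [zpow_natCast]; exact hω.pow_eq_one
  have hpow_ne : ∀ k ∈ Finset.Ico 1 a, ω ^ ((k : ℕ) : ℤ) ≠ 1 := by
    intro k hk
    simp only [Finset.mem_Ico] at hk
    rw [zpow_natCast]
    exact hω.pow_ne_one_of_pos_of_lt (by omega) hk.2
  have hden : ∀ k ∈ Finset.Ico 1 a, 1 - ω ^ (-(k : ℤ)) ≠ 0 := by
    intro k hk h
    apply hpow_ne k hk
    have h1 : ω ^ (-(k : ℤ)) = 1 := by linear_combination -h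
    rwa [zpow_neg, inv_eq_one] at h1
  -- base case
  have base : ∑ k ∈ Finset.Ico 1 a, (1 : ℂ) / (1 - ω ^ (-(k : ℤ)))
      = ((a : ℂ) - 1) / 2 := by
    have reflect : ∑ k ∈ Finset.Ico 1 a, (1 : ℂ) / (1 - ω ^ (-(k : ℤ)))
        = ∑ k ∈ Finset.Ico 1 a, (1 : ℂ) / (1 - ω ^ ((k : ℕ) : ℤ)) := by
      apply Finset.sum_nbij' (fun k => a - k) (fun k => a - k) <;>
        intro k hk <;> simp only [Finset.mem_Ico] at hk ⊢
      · omega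
      · omega
      · omega
      · omega
      · congr 2
        have hcast : ((a - k : ℕ) : ℤ) = (a : ℤ) - k := by omega
        rw [hcast]
        have h2 : -((a : ℤ) - k) = (k : ℤ) + (-(a : ℤ)) := by ring
        rw [show ((a : ℤ) - k) = -(k : ℤ) + (a : ℤ) by ring, zpow_add₀ hω0, hωa,
          mul_one]
    have two_sum : (2 : ℂ) * ∑ k ∈ Finset.Ico 1 a, (1 : ℂ) / (1 - ω ^ (-(k : ℤ)))
        = (a : ℂ) - 1 := by
      rw [two_mul]
      nth_rewrite 2 [reflect]
      rw [← Finset.sum_add_distrib]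
      have hone : ∀ k ∈ Finset.Ico 1 a,
          (1 : ℂ) / (1 - ω ^ (-(k : ℤ))) + (1 : ℂ) / (1 - ω ^ ((k : ℕ) : ℤ)) = 1 := by
        intro k hk
        have hx1 : ω ^ ((k : ℕ) : ℤ) ≠ 1 := hpow_ne k hk
        have hx0 : ω ^ ((k : ℕ) : ℤ) ≠ 0 := zpow_ne_zero _ hω0
        have hd1 : 1 - ω ^ (-(k : ℤ)) ≠ 0 := hden k hk
        have hd2 : 1 - ω ^ ((k : ℕ) : ℤ) ≠ 0 := sub_ne_zero.mpr (Ne.symm hx1)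
        rw [zpow_neg] at hd1 ⊢
        rw [div_add_div _ _ hd1 hd2, div_eq_iff (mul_ne_zero hd1 hd2), one_mul]
        linear_combination -inv_mul_cancel₀ hx0
      rw [Finset.sum_congr rfl hone, Finset.sum_const, Nat.card_Ico, nsmul_eq_mul,
        mul_one]
      have : 1 ≤ a := ha
      push_cast [Nat.cast_sub this]
      ring
    linear_combination two_sum / 2
  -- induction on the residue
  have key : ∀ n : ℕ, n < a →
      ∑ k ∈ Finset.Ico 1 a, ω ^ ((k : ℤ) * (n : ℤ)) / (1 - ω ^ (-(k : ℤ)))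
        = ((a : ℂ) - 1) / 2 - n := by
    intro n
    induction n with
    | zero =>
      intro _
      simpa using base
    | succ n ih =>
      intro hn
      have hn' : n < a := Nat.lt_of_succ_lt hn
      set z : ℂ := ω ^ (n + 1) with hz
      have hz1 : z ≠ 1 := hω.pow_ne_one_of_pos_of_lt (Nat.succ_ne_zero n) hn
      have hzk : ∀ k : ℕ, ω ^ ((k : ℤ) * ((n : ℤ) + 1)) = z ^ k := by
        intro k
        rw [hz, ← pow_mul, ← zpow_natCast ω ((n + 1) * k)]
        congr 1
        push_cast
        ring
      have hgeom : ∑ k ∈ Finset.range a, z ^ k = 0 := by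
        rw [geom_sum_eq hz1]
        have hza : z ^ a = 1 := by
          rw [hz, ← pow_mul, mul_comm, pow_mul, hω.pow_eq_one, one_pow]
        rw [hza, sub_self, zero_div]
      have hsum1 : ∑ k ∈ Finset.Ico 1 a, z ^ k = -1 := by
        have h0 : ∑ k ∈ Finset.Ico 0 a, z ^ k = z ^ 0 + ∑ k ∈ Finset.Ico 1 a, z ^ k :=
          Finset.sum_eq_sum_Ico_succ_bot ha _
        rw [← Finset.range_eq_Ico, hgeom, pow_zero] at h0
        linear_combination -h0
      have hterm : ∀ k ∈ Finset.Ico 1 a,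
          ω ^ ((k : ℤ) * ((n : ℤ) + 1)) / (1 - ω ^ (-(k : ℤ)))
            = ω ^ ((k : ℤ) * (n : ℤ)) / (1 - ω ^ (-(k : ℤ))) + z ^ k := by
        intro k hk
        have hd1 : 1 - ω ^ (-(k : ℤ)) ≠ 0 := hden k hk
        set A : ℂ := ω ^ ((k : ℤ) * (n : ℤ)) with hA
        set x : ℂ := ω ^ ((k : ℕ) : ℤ) with hx
        have hx0 : x ≠ 0 := zpow_ne_zero _ hω0
        have hsplit : ω ^ ((k : ℤ) * ((n : ℤ) + 1)) = A * x := by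
          rw [hA, hx, show (k : ℤ) * ((n : ℤ) + 1) = (k : ℤ) * (n : ℤ) + (k : ℤ) by ring,
            zpow_add₀ hω0]
        have hzk' : z ^ k = A * x := by
          rw [← hzk k, hA, hx,
            show (k : ℤ) * ((n : ℤ) + 1) = (k : ℤ) * (n : ℤ) + (k : ℤ) by ring,
            zpow_add₀ hω0]
        rw [hsplit, hzk', zpow_neg, ← hx] at *
        have hnum : A * x = A + A * x * (1 - x⁻¹) := by
          have hxx : x * x⁻¹ = 1 := mul_inv_cancel₀ hx0
          linear_combination A * hxx
        calc A * x / (1 - x⁻¹) = (A + A * x * (1 - x⁻¹)) / (1 - x⁻¹) := by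
              rw [← hnum]
          _ = A / (1 - x⁻¹) + A * x := by
              rw [add_div, mul_div_cancel_right₀ _ hd1]
      push_cast
      calc ∑ k ∈ Finset.Ico 1 a, ω ^ ((k : ℤ) * ((n : ℤ) + 1)) / (1 - ω ^ (-(k : ℤ)))
          = ∑ k ∈ Finset.Ico 1 a,
              (ω ^ ((k : ℤ) * (n : ℤ)) / (1 - ω ^ (-(k : ℤ))) + z ^ k) := by
            exact Finset.sum_congr rfl hterm
        _ = ((a : ℂ) - 1) / 2 - n + -1 := by
            rw [Finset.sum_add_distrib, ih hn', hsum1]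
        _ = ((a : ℂ) - 1) / 2 - ((n : ℂ) + 1) := by ring
  -- reduce s modulo a
  set q : ℤ := s / (a : ℤ) with hq
  set r : ℕ := (s % (a : ℤ)).toNat with hr
  have ha' : (0 : ℤ) < (a : ℤ) := by exact_mod_cast ha
  have hrnn : (0 : ℤ) ≤ s % (a : ℤ) := Int.emod_nonneg s ha'.ne'
  have hrcast : ((r : ℕ) : ℤ) = s % (a : ℤ) := Int.toNat_of_nonneg hrnn
  have hrlt : r < a := by
    have := Int.emod_lt_of_pos s ha'
    omega
  have hs : s = (a : ℤ) * q + (r : ℤ) := by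
    rw [hrcast, hq]
    exact (Int.mul_ediv_add_emod s (a : ℤ)).symm
  have hred : ∀ k : ℕ, ω ^ ((k : ℤ) * s) = ω ^ ((k : ℤ) * (r : ℤ)) := by
    intro k
    have hexp : (k : ℤ) * s = (a : ℤ) * ((k : ℤ) * q) + (k : ℤ) * (r : ℤ) := by
      rw [hs]; ring
    rw [hexp, zpow_add₀ hω0, zpow_mul, hωa, one_zpow, one_mul]
  have hfloor : ⌊(s : ℚ) / (a : ℚ)⌋ = q := by
    rw [hq]
    exact_mod_cast Rat.floor_intCast_div_natCast s a
  rw [hfloor]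
  have hLHS : ∑ k ∈ Finset.Ico 1 a,
      ω ^ ((k : ℤ) * s) / (1 - ω ^ (-(k : ℤ)))
        = ((a : ℂ) - 1) / 2 - r := by
    rw [← key r hrlt]
    exact Finset.sum_congr rfl fun k _ => by rw [hred k]
  rw [hLHS]
  have hscast : (s : ℂ) = (a : ℂ) * q + (r : ℂ) := by
    rw [hs]; push_cast; ring
  rw [hscast]
  have haC : (a : ℂ) ≠ 0 := Nat.cast_ne_zero.mpr ha.ne'
  field_simp
  ring
end

section
/- Let ν be a partition with conjugate ν′, set S(ν) = {ν_j − j − 1 : j ∈ ℕ} ⊆ ℤ, and let Hook(ν) = {(t,t′) ∈ ℤ² : t < t′, t ∉ S(ν), t′ ∈ S(ν)}. Then the map sending a cell (a,b) of ν to the pair (a − ν′_a, ν_b − b − 1) is a bijection from the set of cells of ν onto Hook(ν); moreover for each cell (a,b), the difference (ν_b − b − 1) − (a − ν′_a) equals the hook length ν_b + ν′_a − a − b − 1 of (a,b). In particular the cardinality of Hook(ν) equals the number of cells of ν. -/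
/-- A partition: a weakly decreasing sequence of nonnegative integers, eventually zero.
Its Young diagram is `{(i,j) : i < part j}`. -/
structure PartitionSeq where
  part : ℕ → ℕ
  antitone' : ∀ ⦃i j : ℕ⦄, i ≤ j → part j ≤ part i
  eventually_zero : ∃ N : ℕ, ∀ i : ℕ, N ≤ i → part i = 0

/-- The set of cells of the Young diagram of `ν`. -/
def cells (ν : PartitionSeq) : Set (ℕ × ℕ) := {p : ℕ × ℕ | p.1 < ν.part p.2}

/-- The set `S(ν) = {ν_j − j − 1 : j ∈ ℕ} ⊆ ℤ`. -/
def Sset (ν : PartitionSeq) : Set ℤ := {s : ℤ | ∃ j : ℕ, s = (ν.part j : ℤ) - j - 1}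

/-- `Hook(ν) = {(t,t′) ∈ ℤ² : t < t′, t ∉ S(ν), t′ ∈ S(ν)}`. -/
def Hook (ν : PartitionSeq) : Set (ℤ × ℤ) :=
  {q : ℤ × ℤ | q.1 < q.2 ∧ q.1 ∉ Sset ν ∧ q.2 ∈ Sset ν}

/-- The fundamental conjugacy relation. -/
lemma key_lemma (ν : PartitionSeq) (ν' : ℕ → ℕ)
    (hconj : ∀ i : ℕ, ν' i = {j : ℕ | i < ν.part j}.ncard) :
    ∀ a j : ℕ, a < ν.part j ↔ j < ν' a := by
  obtain ⟨N, hN⟩ := ν.eventually_zero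
  intro a
  have hex : ∃ j, ν.part j ≤ a := ⟨N, by simp [hN N le_rfl]⟩
  set k := Nat.find hex with hk
  have hset : {j : ℕ | a < ν.part j} = Set.Iio k := by
    ext j
    simp only [Set.mem_setOf_eq, Set.mem_Iio]
    constructor
    · intro h
      by_contra hjk
      push_neg at hjk
      exact absurd (le_trans (ν.antitone' hjk) (Nat.find_spec hex)) (not_le.mpr h)
    · intro h
      have := Nat.find_min hex h
      omega
  have hcard : ν' a = k := by
    rw [hconj, hset, ← Finset.coe_range, Set.ncard_coe_finset, Finset.card_range]
  intro j
  rw [hcard]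
  constructor
  · intro h
    have : j ∈ {j : ℕ | a < ν.part j} := h
    rwa [hset] at this
  · intro h
    have : j ∈ Set.Iio k := h
    rw [← hset] at this
    exact this

/-- The map `(a,b) ↦ (a − ν′_a, ν_b − b − 1)` is a bijection from the
cells of `ν` onto `Hook(ν)`; for each cell the difference of the two coordinates of its
image equals the hook length `ν_b + ν′_a − a − b − 1`; in particular
`#Hook(ν) = #cells(ν)`. -/
theorem statement3 (ν : PartitionSeq) (ν' : ℕ → ℕ)
    (hconj : ∀ i : ℕ, ν' i = {j : ℕ | i < ν.part j}.ncard) :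
    Set.BijOn (fun p : ℕ × ℕ => ((p.1 : ℤ) - (ν' p.1 : ℤ), (ν.part p.2 : ℤ) - p.2 - 1))
      (cells ν) (Hook ν) ∧
    (∀ p : ℕ × ℕ, p ∈ cells ν →
      ((ν.part p.2 : ℤ) - p.2 - 1) - ((p.1 : ℤ) - (ν' p.1 : ℤ))
        = (ν.part p.2 : ℤ) + (ν' p.1 : ℤ) - p.1 - p.2 - 1) ∧
    (Hook ν).ncard = (cells ν).ncard := by
  have key := key_lemma ν ν' hconj
  obtain ⟨N, hN⟩ := ν.eventually_zero
  -- `a - ν'_a` is never in `S(ν)`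
  have hS : ∀ a : ℕ, ((a : ℤ) - (ν' a : ℤ)) ∉ Sset ν := by
    rintro a ⟨j, hj⟩
    rcases lt_or_ge j (ν' a) with h | h
    · have := (key a j).mpr h
      omega
    · have : ¬ a < ν.part j := fun hc => absurd ((key a j).mp hc) (not_lt.mpr h)
      omega
  have hbij : Set.BijOn (fun p : ℕ × ℕ => ((p.1 : ℤ) - (ν' p.1 : ℤ), (ν.part p.2 : ℤ) - p.2 - 1))
      (cells ν) (Hook ν) := by
    refine ⟨?_, ?_, ?_⟩
    · -- MapsTo
      rintro ⟨a, b⟩ hab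
      have hcell : a < ν.part b := hab
      have hb : b < ν' a := (key a b).mp hcell
      refine ⟨?_, hS a, ⟨b, rfl⟩⟩
      simp only
      omega
    · -- InjOn
      rintro ⟨a1, b1⟩ h1 ⟨a2, b2⟩ h2 heq
      simp only [Prod.mk.injEq] at heq
      obtain ⟨e1, e2⟩ := heq
      have ha : a1 = a2 := by
        rcases lt_trichotomy a1 a2 with h | h | h
        · have := (key a2 (ν' a2 - 1))
          have hmono : ν' a2 ≤ ν' a1 := by
            by_contra hc
            push_neg at hc
            have h1' : a2 < ν.part (ν' a1) := (key a2 (ν' a1)).mpr hc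
            have h2' : ¬ a1 < ν.part (ν' a1) := fun hc2 =>
              absurd ((key a1 (ν' a1)).mp hc2) (lt_irrefl _)
            omega
          omega
        · exact h
        · have hmono : ν' a1 ≤ ν' a2 := by
            by_contra hc
            push_neg at hc
            have h1' : a1 < ν.part (ν' a2) := (key a1 (ν' a2)).mpr hc
            have h2' : ¬ a2 < ν.part (ν' a2) := fun hc2 =>
              absurd ((key a2 (ν' a2)).mp hc2) (lt_irrefl _)
            omega
          omega
      have hb : b1 = b2 := by
        rcases lt_trichotomy b1 b2 with h | h | h
        · have := ν.antitone' h.le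
          omega
        · exact h
        · have := ν.antitone' h.le
          omega
      exact Prod.ext ha hb
    · -- SurjOn
      rintro ⟨t, t'⟩ ⟨hlt, htS, ⟨b, hb⟩⟩
      simp only at hlt htS hb
      -- find a with a - ν'_a = t
      have hex : ∃ j : ℕ, (ν.part j : ℤ) - j - 1 ≤ t := by
        refine ⟨N + (-t - 1).toNat, ?_⟩
        rw [hN _ (Nat.le_add_right _ _)]
        have : (-t - 1) ≤ ((-t - 1).toNat : ℤ) := Int.self_le_toNat _
        push_cast
        omega
      set k := Nat.find hex with hk
      have hfk : (ν.part k : ℤ) - k - 1 ≤ t := Nat.find_spec hex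
      have hfkne : (ν.part k : ℤ) - k - 1 ≠ t := fun h => htS ⟨k, h.symm⟩
      have hfklt : (ν.part k : ℤ) - k - 1 < t := lt_of_le_of_ne hfk hfkne
      have htk : 0 ≤ t + k := by omega
      set a := (t + k).toNat with ha
      have haz : (a : ℤ) = t + k := Int.toNat_of_nonneg htk
      -- ν' a = k
      have hiff : ∀ j : ℕ, a < ν.part j ↔ j < k := by
        intro j
        constructor
        · intro h
          by_contra hjk
          push_neg at hjk
          have := ν.antitone' hjk
          omega
        · intro h
          have hk0 : 0 < k := Nat.pos_of_ne_zero (by omega)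
          have hkm : ¬ (ν.part (k - 1) : ℤ) - (k - 1 : ℕ) - 1 ≤ t :=
            Nat.find_min hex (by omega)
          push_neg at hkm
          have hjm : ν.part (k - 1) ≤ ν.part j := ν.antitone' (by omega)
          have hc : ((k : ℤ) - 1) = ((k - 1 : ℕ) : ℤ) := by omega
          rw [← hc] at hkm
          omega
      have hva : ν' a = k := by
        rcases lt_trichotomy (ν' a) k with h | h | h
        · have h1' : a < ν.part (ν' a) := (hiff (ν' a)).mpr h
          have := (key a (ν' a)).mp h1'
          omega
        · exact h
        · have h1' : a < ν.part k := (key a k).mpr h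
          have := (hiff k).mp h1'
          omega
      -- a < ν.part b
      have hcell : a < ν.part b := by
        by_contra hc
        push_neg at hc
        have hnb : ¬ b < ν' a := fun h => absurd ((key a b).mpr h) (not_lt.mpr hc)
        omega
      refine ⟨(a, b), hcell, ?_⟩
      simp only [Prod.mk.injEq]
      exact ⟨by omega, hb.symm⟩
  refine ⟨hbij, fun p _ => by ring, ?_⟩
  rw [← hbij.image_eq, Set.ncard_image_of_injOn hbij.injOn]
end

section
/- Let ν and ρ be partitions, and for a partition π let π(·): ℤ → {+1,−1} denote its edge sequence. Suppose there are integers t₁ < t₂ such that ν(t₁) = +1, ν(t₂) = −1, ρ(t₁) = −1, ρ(t₂) = +1, and ν(t) = ρ(t) for all t ∉ {t₁, t₂}. Then the Young diagram of ν is contained in that of ρ, and the content map (i,j) ↦ i − j restricts to a bijection from the set of cells of ρ not in ν onto the integer interval {t₁+1, …, t₂}. In particular |ρ| − |ν| = t₂ − t₁, and no two cells of ρ∖ν have the same content. -/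
open Classical in
/-- The edge sequence of a partition: `ν(t) = +1` if `t ∈ {ν_j − j − 1 : j ∈ ℕ}`,
and `ν(t) = −1` otherwise. -/
noncomputable def edgeSeq (ν : PartitionSeq) (t : ℤ) : ℤ :=
  if ∃ j : ℕ, t = (ν.part j : ℤ) - j - 1 then 1 else -1

lemma fnum_exists (ν : PartitionSeq) (c : ℤ) : ∃ j : ℕ, (ν.part j : ℤ) - j - 1 < c := by
  obtain ⟨N, hN⟩ := ν.eventually_zero
  refine ⟨N + (-c).toNat + 1, ?_⟩
  have h0 : ν.part (N + (-c).toNat + 1) = 0 := hN _ (by omega)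
  rw [h0]; push_cast; omega

noncomputable def fnum (ν : PartitionSeq) (c : ℤ) : ℕ := Nat.find (fnum_exists ν c)

lemma s_anti (ν : PartitionSeq) {j k : ℕ} (h : j ≤ k) :
    (ν.part k : ℤ) - k - 1 ≤ (ν.part j : ℤ) - j - 1 := by
  have := ν.antitone' h
  omega

lemma lt_fnum_iff (ν : PartitionSeq) (c : ℤ) (j : ℕ) :
    j < fnum ν c ↔ c ≤ (ν.part j : ℤ) - j - 1 := by
  constructor
  · intro h
    have := Nat.find_min (fnum_exists ν c) h
    omega
  · intro h
    by_contra h'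
    push_neg at h'
    have h2 : (ν.part (fnum ν c) : ℤ) - (fnum ν c) - 1 < c := Nat.find_spec (fnum_exists ν c)
    have h3 := s_anti ν h'
    omega

lemma mem_cells_iff (ν : PartitionSeq) (p : ℕ × ℕ) :
    p ∈ cells ν ↔ p.2 < fnum ν ((p.1 : ℤ) - p.2) := by
  rw [lt_fnum_iff]
  simp only [cells, Set.mem_setOf_eq]
  omega

lemma fnum_nonneg_sum (ν : PartitionSeq) (c : ℤ) : 0 ≤ c + fnum ν c := by
  rcases le_or_gt 0 c with h | h
  · positivity
  · have hj : ((-c - 1).toNat : ℤ) = -c - 1 := by omega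
    have : (-c - 1).toNat < fnum ν c := by
      rw [lt_fnum_iff, hj]
      have : (0 : ℤ) ≤ ν.part (-c - 1).toNat := by positivity
      omega
    omega

/-- The set of elements of `S(ν)` that are `≥ c`. -/
def Tset (ν : PartitionSeq) (c : ℤ) : Set ℤ :=
  {t : ℤ | c ≤ t ∧ ∃ j : ℕ, t = (ν.part j : ℤ) - j - 1}

lemma Tset_finite (ν : PartitionSeq) (c : ℤ) : (Tset ν c).Finite := by
  apply (Set.finite_Icc c ((ν.part 0 : ℤ) - 1)).subset
  rintro t ⟨h1, j, rfl⟩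
  have := s_anti ν (Nat.zero_le j)
  simp only [Set.mem_Icc]
  constructor
  · exact h1
  · simpa using this

lemma fnum_eq_ncard (ν : PartitionSeq) (c : ℤ) : fnum ν c = (Tset ν c).ncard := by
  have himg : Tset ν c = (fun j : ℕ => (ν.part j : ℤ) - j - 1) '' (Set.Iio (fnum ν c)) := by
    ext t
    constructor
    · rintro ⟨h1, j, rfl⟩
      exact ⟨j, (lt_fnum_iff ν c j).2 h1, rfl⟩
    · rintro ⟨j, hj, rfl⟩
      exact ⟨(lt_fnum_iff ν c j).1 hj, j, rfl⟩
  rw [himg, Set.ncard_image_of_injOn, ← Finset.coe_Iio, Set.ncard_coe_finset, Nat.card_Iio]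
  intro j _ k _ h
  by_contra hne
  rcases Nat.lt_or_ge j k with hlt | hge
  · have := ν.antitone' hlt.le; simp only at h; omega
  · have hlt : k < j := by omega
    have := ν.antitone' hlt.le; simp only at h; omega

lemma edge_one_iff (ν : PartitionSeq) (t : ℤ) :
    edgeSeq ν t = 1 ↔ ∃ j : ℕ, t = (ν.part j : ℤ) - j - 1 := by
  unfold edgeSeq
  split <;> simp_all

/-- If the edge sequences of partitions `ν` and `ρ` differ only at
`t₁ < t₂`, with `ν(t₁) = +1, ν(t₂) = −1, ρ(t₁) = −1, ρ(t₂) = +1`, then the diagram of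
`ν` is contained in that of `ρ`, and the content map `(i,j) ↦ i − j` is a bijection from
`ρ∖ν` onto `{t₁+1, …, t₂}`. In particular `|ρ| − |ν| = t₂ − t₁`, and no two cells of
`ρ∖ν` have the same content. -/
theorem statement5 (ν ρ : PartitionSeq) (t₁ t₂ : ℤ) (hlt : t₁ < t₂)
    (h1 : edgeSeq ν t₁ = 1) (h2 : edgeSeq ν t₂ = -1)
    (h3 : edgeSeq ρ t₁ = -1) (h4 : edgeSeq ρ t₂ = 1)
    (h5 : ∀ t : ℤ, t ≠ t₁ → t ≠ t₂ → edgeSeq ν t = edgeSeq ρ t) :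
    cells ν ⊆ cells ρ ∧
    Set.BijOn (fun p : ℕ × ℕ => (p.1 : ℤ) - (p.2 : ℤ)) (cells ρ \ cells ν)
      (Set.Ioc t₁ t₂) ∧
    ((cells ρ).ncard : ℤ) - ((cells ν).ncard : ℤ) = t₂ - t₁ ∧
    Set.InjOn (fun p : ℕ × ℕ => (p.1 : ℤ) - (p.2 : ℤ)) (cells ρ \ cells ν) := by
  -- translate edge hypotheses into membership statements
  have hm1 : ∃ j : ℕ, t₁ = (ν.part j : ℤ) - j - 1 := (edge_one_iff ν t₁).1 h1
  have hm2 : ¬ ∃ j : ℕ, t₂ = (ν.part j : ℤ) - j - 1 := by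
    intro h; rw [← edge_one_iff] at h; omega
  have hm3 : ¬ ∃ j : ℕ, t₁ = (ρ.part j : ℤ) - j - 1 := by
    intro h; rw [← edge_one_iff] at h; omega
  have hm4 : ∃ j : ℕ, t₂ = (ρ.part j : ℤ) - j - 1 := (edge_one_iff ρ t₂).1 h4
  have hm5 : ∀ t : ℤ, t ≠ t₁ → t ≠ t₂ →
      ((∃ j : ℕ, t = (ν.part j : ℤ) - j - 1) ↔ (∃ j : ℕ, t = (ρ.part j : ℤ) - j - 1)) := by
    intro t ha hb
    rw [← edge_one_iff, ← edge_one_iff, h5 t ha hb]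
  -- the key relation between the counting functions
  have key : ∀ c : ℤ, (c ∈ Set.Ioc t₁ t₂ → fnum ρ c = fnum ν c + 1) ∧
      (c ∉ Set.Ioc t₁ t₂ → fnum ρ c = fnum ν c) := by
    intro c
    constructor
    · rintro ⟨hc1, hc2⟩
      have hT : Tset ρ c = insert t₂ (Tset ν c) := by
        ext t
        simp only [Tset, Set.mem_setOf_eq, Set.mem_insert_iff]
        constructor
        · rintro ⟨ht, hmem⟩
          rcases eq_or_ne t t₂ with rfl | h2'
          · exact Or.inl rfl
          · rcases eq_or_ne t t₁ with rfl | h1'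
            · exact absurd hmem hm3
            · exact Or.inr ⟨ht, (hm5 t h1' h2').2 hmem⟩
        · rintro (rfl | ⟨ht, hmem⟩)
          · exact ⟨hc2, hm4⟩
          · rcases eq_or_ne t t₂ with rfl | h2'
            · exact ⟨ht, hm4⟩
            · rcases eq_or_ne t t₁ with rfl | h1'
              · omega
              · exact ⟨ht, (hm5 t h1' h2').1 hmem⟩
      have ht2 : t₂ ∉ Tset ν c := fun ⟨_, h⟩ => hm2 h
      rw [fnum_eq_ncard, fnum_eq_ncard, hT,
        Set.ncard_insert_of_notMem ht2 (Tset_finite ν c)]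
    · intro hc
      simp only [Set.mem_Ioc, not_and, not_le] at hc
      rcases le_or_gt c t₁ with hc1 | hc1
      · -- c ≤ t₁ < t₂ : swap t₁ for t₂
        have hT : Tset ρ c = insert t₂ (Tset ν c \ {t₁}) := by
          ext t
          simp only [Tset, Set.mem_setOf_eq, Set.mem_insert_iff, Set.mem_diff,
            Set.mem_singleton_iff]
          constructor
          · rintro ⟨ht, hmem⟩
            rcases eq_or_ne t t₂ with rfl | h2'
            · exact Or.inl rfl
            · rcases eq_or_ne t t₁ with rfl | h1'
              · exact absurd hmem hm3
              · exact Or.inr ⟨⟨ht, (hm5 t h1' h2').2 hmem⟩, h1'⟩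
          · rintro (rfl | ⟨⟨ht, hmem⟩, h1'⟩)
            · exact ⟨by omega, hm4⟩
            · rcases eq_or_ne t t₂ with rfl | h2'
              · exact ⟨ht, hm4⟩
              · exact ⟨ht, (hm5 t h1' h2').1 hmem⟩
        have ht2 : t₂ ∉ Tset ν c \ {t₁} := fun ⟨⟨_, h⟩, _⟩ => hm2 h
        have ht1 : t₁ ∈ Tset ν c := ⟨hc1, hm1⟩
        have hfin := Tset_finite ν c
        have e1 : (Tset ν c \ ({t₁} : Set ℤ)).ncard + 1 = (Tset ν c).ncard :=
          Set.ncard_diff_singleton_add_one ht1 hfin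
        rw [fnum_eq_ncard, fnum_eq_ncard, hT,
          Set.ncard_insert_of_notMem ht2 (hfin.diff (t := {t₁})), e1]
      · -- t₂ < c : nothing changes
        have hc2 := hc hc1
        have hT : Tset ρ c = Tset ν c := by
          ext t
          simp only [Tset, Set.mem_setOf_eq]
          constructor
          · rintro ⟨ht, hmem⟩
            rcases eq_or_ne t t₂ with rfl | h2'
            · omega
            · rcases eq_or_ne t t₁ with rfl | h1'
              · omega
              · exact ⟨ht, (hm5 t h1' h2').2 hmem⟩
          · rintro ⟨ht, hmem⟩
            rcases eq_or_ne t t₂ with rfl | h2'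
            · omega
            · rcases eq_or_ne t t₁ with rfl | h1'
              · omega
              · exact ⟨ht, (hm5 t h1' h2').1 hmem⟩
        rw [fnum_eq_ncard, fnum_eq_ncard, hT]
    -- end key
  have hmono : ∀ c : ℤ, fnum ν c ≤ fnum ρ c := by
    intro c
    by_cases hc : c ∈ Set.Ioc t₁ t₂
    · have := (key c).1 hc; omega
    · have := (key c).2 hc; omega
  have hsub : cells ν ⊆ cells ρ := by
    intro p hp
    rw [mem_cells_iff] at hp ⊢
    exact lt_of_lt_of_le hp (hmono _)
  -- characterization of the skew cells
  have hdiff : ∀ p : ℕ × ℕ, p ∈ cells ρ \ cells ν ↔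
      ((p.1 : ℤ) - p.2 ∈ Set.Ioc t₁ t₂ ∧ p.2 = fnum ν ((p.1 : ℤ) - p.2)) := by
    intro p
    constructor
    · rintro ⟨hρ, hν⟩
      rw [mem_cells_iff] at hρ hν
      have hc : (p.1 : ℤ) - p.2 ∈ Set.Ioc t₁ t₂ := by
        by_contra hc
        have := (key _).2 hc
        omega
      have := (key _).1 hc
      exact ⟨hc, by omega⟩
    · rintro ⟨hc, hj⟩
      have := (key _).1 hc
      constructor
      · rw [mem_cells_iff]; omega
      · rw [mem_cells_iff]; omega
  have hinj : Set.InjOn (fun p : ℕ × ℕ => (p.1 : ℤ) - (p.2 : ℤ)) (cells ρ \ cells ν) := by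
    intro p hp q hq hpq
    rw [hdiff] at hp hq
    simp only at hpq
    have h2 : p.2 = q.2 := by rw [hp.2, hq.2, hpq]
    have h1 : p.1 = q.1 := by omega
    exact Prod.ext h1 h2
  have hbij : Set.BijOn (fun p : ℕ × ℕ => (p.1 : ℤ) - (p.2 : ℤ)) (cells ρ \ cells ν)
      (Set.Ioc t₁ t₂) := by
    refine ⟨fun p hp => ((hdiff p).1 hp).1, hinj, ?_⟩
    intro c hc
    have hnn : 0 ≤ c + fnum ν c := fnum_nonneg_sum ν c
    refine ⟨((c + fnum ν c).toNat, fnum ν c), ?_, ?_⟩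
    · rw [hdiff]
      constructor
      · simp only
        rw [Int.toNat_of_nonneg hnn]
        simpa using hc
      · simp only
        congr 1
        rw [Int.toNat_of_nonneg hnn]
        ring
    · simp only
      rw [Int.toNat_of_nonneg hnn]
      ring
  -- finiteness of cells
  have hfin : ∀ π : PartitionSeq, (cells π).Finite := by
    intro π
    obtain ⟨N, hN⟩ := π.eventually_zero
    apply ((Set.finite_Iio (π.part 0)).prod (Set.finite_Iio N)).subset
    rintro ⟨i, j⟩ hp
    simp only [cells, Set.mem_setOf_eq] at hp
    constructor
    · exact lt_of_lt_of_le hp (π.antitone' (Nat.zero_le j))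
    · simp only [Set.mem_Iio]
      by_contra h
      push_neg at h
      rw [hN j h] at hp
      omega
  -- cardinality
  have hcard : ((cells ρ).ncard : ℤ) - ((cells ν).ncard : ℤ) = t₂ - t₁ := by
    have hdiffcard : (cells ρ \ cells ν).ncard = (Set.Ioc t₁ t₂).ncard := by
      rw [← hbij.image_eq, Set.ncard_image_of_injOn hinj]
    have hIoc : (Set.Ioc t₁ t₂).ncard = (t₂ - t₁).toNat := by
      rw [← Finset.coe_Ioc, Set.ncard_coe_finset, Int.card_Ioc]
    have hd : (cells ρ \ cells ν).ncard = (cells ρ).ncard - (cells ν).ncard :=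
      Set.ncard_diff hsub ((hfin ν))
    have hle : (cells ν).ncard ≤ (cells ρ).ncard :=
      Set.ncard_le_ncard hsub (hfin ρ)
    omega
  exact ⟨hsub, hbij, hcard, hinj⟩
end

section
/- Let λ and μ be partitions. For N ∈ ℤ let f(N) be the number of partitions ρ with |ρ| = N, λ ≺ ρ and μ ≺ ρ, and let g(M) be the number of partitions η with |η| = M, η ≺ λ and η ≺ μ (these sets are finite, and f(N) = 0, g(M) = 0 when N < 0, M < 0). Then for every integer N, f(N) − f(N−1) = g(|λ| + |μ| − N). -/
/-- The size `|ν| = ∑_j ν_j` of a partition. -/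
noncomputable def size (ν : PartitionSeq) : ℕ := ∑ᶠ j : ℕ, ν.part j

/-- `Interlaces μ λ` means `μ ≺ λ`, i.e. `λ_0 ≥ μ_0 ≥ λ_1 ≥ μ_1 ≥ ⋯`. -/
def Interlaces (μ lam : PartitionSeq) : Prop :=
  ∀ j : ℕ, μ.part j ≤ lam.part j ∧ lam.part (j + 1) ≤ μ.part j

lemma PartitionSeq.ext' {ρ σ : PartitionSeq} (h : ∀ j, ρ.part j = σ.part j) : ρ = σ := by
  cases ρ; cases σ
  simp only [PartitionSeq.mk.injEq]
  exact funext h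

lemma size_eq_sum (ν : PartitionSeq) {K : ℕ} (hK : ∀ i, K ≤ i → ν.part i = 0) :
    size ν = ∑ j ∈ Finset.range K, ν.part j := by
  refine finsum_eq_finset_sum_of_support_subset _ ?_
  intro x hx
  simp only [Function.mem_support] at hx
  simp only [Finset.coe_range, Set.mem_Iio]
  by_contra h
  exact hx (hK x (le_of_not_gt h))

lemma part_le_size (ν : PartitionSeq) (j : ℕ) : ν.part j ≤ size ν := by
  obtain ⟨K, hK⟩ := ν.eventually_zero
  rw [size_eq_sum ν (K := max K (j+1)) (fun i hi => hK i (le_trans (le_max_left _ _) hi))]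
  exact Finset.single_le_sum (f := fun i => ν.part i) (fun i _ => Nat.zero_le _)
    (Finset.mem_range.mpr (lt_of_lt_of_le (Nat.lt_succ_self j) (le_max_right _ _)))

lemma part_eq_zero_of_size {ν : PartitionSeq} {n j : ℕ} (h : size ν = n) (hj : n ≤ j) :
    ν.part j = 0 := by
  by_contra hne
  have h1 : ∀ i, i ≤ j → 1 ≤ ν.part i := fun i hi =>
    le_trans (Nat.pos_of_ne_zero hne) (ν.antitone' hi)
  obtain ⟨K, hK⟩ := ν.eventually_zero
  have hs := size_eq_sum ν (K := max K (j+1)) (fun i hi => hK i (le_trans (le_max_left _ _) hi))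
  have hbig : j + 1 ≤ size ν := by
    rw [hs]
    calc j + 1 = ∑ _i ∈ Finset.range (j+1), 1 := by simp
    _ ≤ ∑ i ∈ Finset.range (j+1), ν.part i :=
        Finset.sum_le_sum (fun i hi => h1 i (Nat.lt_succ_iff.mp (Finset.mem_range.mp hi)))
    _ ≤ ∑ i ∈ Finset.range (max K (j+1)), ν.part i :=
        Finset.sum_le_sum_of_subset (Finset.range_subset_range.mpr (le_max_right _ _))
  omega

lemma finite_size (n : ℕ) : {ρ : PartitionSeq | size ρ = n}.Finite := by
  rw [← Set.finite_coe_iff]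
  have hf : Function.Injective (fun (ρ : {ρ : PartitionSeq | size ρ = n}) (j : Fin n) =>
      (⟨ρ.1.part j, Nat.lt_succ_of_le (le_of_le_of_eq (part_le_size ρ.1 j) ρ.2)⟩ : Fin (n+1))) := by
    rintro ⟨ρ, hρ⟩ ⟨σ, hσ⟩ h
    ext1
    refine PartitionSeq.ext' (fun j => ?_)
    by_cases hj : j < n
    · have := congrFun h ⟨j, hj⟩
      simpa using this
    · rw [part_eq_zero_of_size hρ (le_of_not_gt hj), part_eq_zero_of_size hσ (le_of_not_gt hj)]
  exact Finite.of_injective _ hf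

def up (ρ : PartitionSeq) : PartitionSeq where
  part j := ρ.part j + if j = 0 then 1 else 0
  antitone' := by
    intro i j hij
    by_cases hj : j = 0
    · subst hj
      have : i = 0 := Nat.le_zero.mp hij
      subst this; exact le_rfl
    · simp only [hj, if_false, add_zero]
      exact le_trans (ρ.antitone' hij) (Nat.le_add_right _ _)
  eventually_zero := by
    obtain ⟨K, hK⟩ := ρ.eventually_zero
    exact ⟨K + 1, fun i hi => by
      have h0 : i ≠ 0 := by omega
      simp [h0, hK i (by omega)]⟩

lemma size_up (ρ : PartitionSeq) : size (up ρ) = size ρ + 1 := by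
  obtain ⟨K, hK⟩ := ρ.eventually_zero
  have h1 : ∀ i, K + 1 ≤ i → (up ρ).part i = 0 := by
    intro i hi
    show ρ.part i + _ = 0
    have h0 : i ≠ 0 := by omega
    simp [h0, hK i (by omega)]
  have h2 : ∀ i, K + 1 ≤ i → ρ.part i = 0 := fun i hi => hK i (by omega)
  rw [size_eq_sum _ h1, size_eq_sum _ h2]
  show ∑ j ∈ Finset.range (K+1), (ρ.part j + if j = 0 then 1 else 0) = _
  rw [Finset.sum_add_distrib, Finset.sum_ite_eq' (Finset.range (K+1)) 0 (fun _ => 1)]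
  simp

lemma up_injective : Function.Injective up := by
  intro a b h
  have hp : ∀ j, (up a).part j = (up b).part j := fun j => congrFun (congrArg PartitionSeq.part h) j
  refine PartitionSeq.ext' (fun j => ?_)
  have := hp j
  by_cases hj : j = 0 <;> simp [up, hj] at this ⊢ <;> omega

/-- candidate parts for the image of `ρ` (when `ρ.part 0` is minimal). -/
def gpart (lam mu ρ : PartitionSeq) (j : ℕ) : ℕ :=
  min (lam.part j) (mu.part j) + max (lam.part (j+1)) (mu.part (j+1)) - ρ.part (j+1)

/-- candidate parts for the image of `η`. -/
def hpart (lam mu η : PartitionSeq) : ℕ → ℕ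
  | 0 => max (lam.part 0) (mu.part 0)
  | (j+1) => min (lam.part j) (mu.part j) + max (lam.part (j+1)) (mu.part (j+1)) - η.part j

lemma gpart_eventually (lam mu ρ : PartitionSeq) :
    ∃ K : ℕ, ∀ i : ℕ, K ≤ i → gpart lam mu ρ i = 0 := by
  obtain ⟨K1, h1⟩ := lam.eventually_zero
  obtain ⟨K2, h2⟩ := mu.eventually_zero
  refine ⟨K1 + K2, fun i hi => ?_⟩
  unfold gpart
  rw [h1 i (by omega), h2 i (by omega), h1 (i+1) (by omega), h2 (i+1) (by omega)]
  simp

lemma hpart_eventually (lam mu η : PartitionSeq) :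
    ∃ K : ℕ, ∀ i : ℕ, K ≤ i → hpart lam mu η i = 0 := by
  obtain ⟨K1, h1⟩ := lam.eventually_zero
  obtain ⟨K2, h2⟩ := mu.eventually_zero
  refine ⟨K1 + K2 + 1, fun i hi => ?_⟩
  obtain ⟨j, rfl⟩ : ∃ j, i = j + 1 := ⟨i - 1, by omega⟩
  show min (lam.part j) (mu.part j) + max (lam.part (j+1)) (mu.part (j+1)) - η.part j = 0
  rw [h1 j (by omega), h2 j (by omega), h1 (j+1) (by omega), h2 (j+1) (by omega)]
  simp

open Classical in
noncomputable def reflA (lam mu ρ : PartitionSeq) : PartitionSeq :=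
  if h : ∀ ⦃i j : ℕ⦄, i ≤ j → gpart lam mu ρ j ≤ gpart lam mu ρ i then
    ⟨gpart lam mu ρ, h, gpart_eventually lam mu ρ⟩
  else ρ

open Classical in
noncomputable def reflC (lam mu η : PartitionSeq) : PartitionSeq :=
  if h : ∀ ⦃i j : ℕ⦄, i ≤ j → hpart lam mu η j ≤ hpart lam mu η i then
    ⟨hpart lam mu η, h, hpart_eventually lam mu η⟩
  else η

lemma antitone_of_succ {f : ℕ → ℕ} (h : ∀ n, f (n+1) ≤ f n) :
    ∀ ⦃i j : ℕ⦄, i ≤ j → f j ≤ f i :=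
  fun _ _ hij => antitone_nat_of_succ_le h hij

lemma gpart_antitone {lam mu ρ : PartitionSeq} (h1 : Interlaces lam ρ) (h2 : Interlaces mu ρ) :
    ∀ ⦃i j : ℕ⦄, i ≤ j → gpart lam mu ρ j ≤ gpart lam mu ρ i := by
  refine antitone_of_succ (fun n => ?_)
  show min (lam.part (n+1)) (mu.part (n+1)) + max (lam.part (n+2)) (mu.part (n+2)) - ρ.part (n+2)
    ≤ min (lam.part n) (mu.part n) + max (lam.part (n+1)) (mu.part (n+1)) - ρ.part (n+1)
  have b1 : ρ.part (n+1) ≤ lam.part n := (h1 n).2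
  have b2 : ρ.part (n+1) ≤ mu.part n := (h2 n).2
  have c1 : lam.part (n+2) ≤ ρ.part (n+2) := (h1 (n+2)).1
  have c2 : mu.part (n+2) ≤ ρ.part (n+2) := (h2 (n+2)).1
  simp only [Nat.min_def, Nat.max_def]
  split_ifs <;> omega

lemma hpart_antitone {lam mu η : PartitionSeq} (h1 : Interlaces η lam) (h2 : Interlaces η mu) :
    ∀ ⦃i j : ℕ⦄, i ≤ j → hpart lam mu η j ≤ hpart lam mu η i := by
  refine antitone_of_succ (fun n => ?_)
  match n with
  | 0 =>
    show min (lam.part 0) (mu.part 0) + max (lam.part 1) (mu.part 1) - η.part 0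
      ≤ max (lam.part 0) (mu.part 0)
    have a1 : lam.part 1 ≤ η.part 0 := (h1 0).2
    have a2 : mu.part 1 ≤ η.part 0 := (h2 0).2
    simp only [Nat.min_def, Nat.max_def]
    split_ifs <;> omega
  | (n+1) =>
    show min (lam.part (n+1)) (mu.part (n+1)) + max (lam.part (n+2)) (mu.part (n+2)) - η.part (n+1)
      ≤ min (lam.part n) (mu.part n) + max (lam.part (n+1)) (mu.part (n+1)) - η.part n
    have a1 : lam.part (n+2) ≤ η.part (n+1) := (h1 (n+1)).2
    have a2 : mu.part (n+2) ≤ η.part (n+1) := (h2 (n+1)).2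
    have c1 : η.part n ≤ lam.part n := (h1 n).1
    have c2 : η.part n ≤ mu.part n := (h2 n).1
    simp only [Nat.min_def, Nat.max_def]
    split_ifs <;> omega

lemma reflA_part {lam mu ρ : PartitionSeq} (h1 : Interlaces lam ρ) (h2 : Interlaces mu ρ) :
    (reflA lam mu ρ).part = gpart lam mu ρ := by
  rw [reflA, dif_pos (gpart_antitone h1 h2)]

lemma reflC_part {lam mu η : PartitionSeq} (h1 : Interlaces η lam) (h2 : Interlaces η mu) :
    (reflC lam mu η).part = hpart lam mu η := by
  rw [reflC, dif_pos (hpart_antitone h1 h2)]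

lemma size_pair {lam mu ρ η : PartitionSeq}
    (h0 : ρ.part 0 = max (lam.part 0) (mu.part 0))
    (hsum : ∀ j, η.part j + ρ.part (j+1)
      = min (lam.part j) (mu.part j) + max (lam.part (j+1)) (mu.part (j+1))) :
    size ρ + size η = size lam + size mu := by
  obtain ⟨K1, hK1⟩ := lam.eventually_zero
  obtain ⟨K2, hK2⟩ := mu.eventually_zero
  obtain ⟨K3, hK3⟩ := ρ.eventually_zero
  obtain ⟨K4, hK4⟩ := η.eventually_zero
  set K' := K1 + K2 + K3 + K4 + 1 with hK'
  rw [size_eq_sum lam (K := K'+1) (fun i hi => hK1 i (by omega)),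
      size_eq_sum mu (K := K'+1) (fun i hi => hK2 i (by omega)),
      size_eq_sum ρ (K := K'+1) (fun i hi => hK3 i (by omega)),
      size_eq_sum η (K := K'+1) (fun i hi => hK4 i (by omega))]
  have e1 : ∑ i ∈ Finset.range (K'+1), ρ.part i
      = ∑ i ∈ Finset.range K', ρ.part (i+1) + ρ.part 0 := Finset.sum_range_succ' _ _
  have e2 : ∑ i ∈ Finset.range (K'+1), η.part i
      = ∑ i ∈ Finset.range K', η.part i + η.part K' := Finset.sum_range_succ _ _
  have e3 : η.part K' = 0 := hK4 K' (by omega)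
  have e4 : ∑ i ∈ Finset.range K', η.part i + ∑ i ∈ Finset.range K', ρ.part (i+1)
      = ∑ i ∈ Finset.range K',
          (min (lam.part i) (mu.part i) + max (lam.part (i+1)) (mu.part (i+1))) := by
    rw [← Finset.sum_add_distrib]
    exact Finset.sum_congr rfl (fun i _ => hsum i)
  have e5 : ∑ i ∈ Finset.range K',
        (min (lam.part i) (mu.part i) + max (lam.part (i+1)) (mu.part (i+1)))
      = ∑ i ∈ Finset.range K', min (lam.part i) (mu.part i)
        + ∑ i ∈ Finset.range K', max (lam.part (i+1)) (mu.part (i+1)) :=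
    Finset.sum_add_distrib
  have e6 : ∑ i ∈ Finset.range (K'+1), max (lam.part i) (mu.part i)
      = ∑ i ∈ Finset.range K', max (lam.part (i+1)) (mu.part (i+1))
        + max (lam.part 0) (mu.part 0) := Finset.sum_range_succ' _ _
  have e7 : ∑ i ∈ Finset.range (K'+1), min (lam.part i) (mu.part i)
      = ∑ i ∈ Finset.range K', min (lam.part i) (mu.part i)
        + min (lam.part K') (mu.part K') := Finset.sum_range_succ _ _
  have e8 : min (lam.part K') (mu.part K') = 0 := by
    rw [hK1 K' (by omega)]; simp
  have e9 : ∑ i ∈ Finset.range (K'+1),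
        (min (lam.part i) (mu.part i) + max (lam.part i) (mu.part i))
      = ∑ i ∈ Finset.range (K'+1), (lam.part i + mu.part i) :=
    Finset.sum_congr rfl (fun i _ => min_add_max _ _)
  have e10 : ∑ i ∈ Finset.range (K'+1),
        (min (lam.part i) (mu.part i) + max (lam.part i) (mu.part i))
      = ∑ i ∈ Finset.range (K'+1), min (lam.part i) (mu.part i)
        + ∑ i ∈ Finset.range (K'+1), max (lam.part i) (mu.part i) :=
    Finset.sum_add_distrib
  have e11 : ∑ i ∈ Finset.range (K'+1), (lam.part i + mu.part i)
      = ∑ i ∈ Finset.range (K'+1), lam.part i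
        + ∑ i ∈ Finset.range (K'+1), mu.part i := Finset.sum_add_distrib
  omega

lemma reflA_interlaces {lam mu ρ : PartitionSeq}
    (h1 : Interlaces lam ρ) (h2 : Interlaces mu ρ) :
    Interlaces (reflA lam mu ρ) lam ∧ Interlaces (reflA lam mu ρ) mu := by
  have hp := reflA_part h1 h2
  have key : ∀ j, (reflA lam mu ρ).part j ≤ min (lam.part j) (mu.part j)
      ∧ max (lam.part (j+1)) (mu.part (j+1)) ≤ (reflA lam mu ρ).part j := by
    intro j
    rw [hp]
    show gpart lam mu ρ j ≤ _ ∧ _ ≤ gpart lam mu ρ j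
    unfold gpart
    have a1 : lam.part (j+1) ≤ ρ.part (j+1) := (h1 (j+1)).1
    have a2 : mu.part (j+1) ≤ ρ.part (j+1) := (h2 (j+1)).1
    have b1 : ρ.part (j+1) ≤ lam.part j := (h1 j).2
    have b2 : ρ.part (j+1) ≤ mu.part j := (h2 j).2
    simp only [Nat.min_def, Nat.max_def]
    split_ifs <;> omega
  constructor <;> intro j <;>
    [have k1 := (key j).1; have k1 := (key j).1] <;> have k2 := (key j).2 <;>
    constructor
  · exact le_trans k1 (min_le_left _ _)
  · exact le_trans (le_max_left _ _) k2
  · exact le_trans k1 (min_le_right _ _)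
  · exact le_trans (le_max_right _ _) k2

lemma reflA_sum {lam mu ρ : PartitionSeq}
    (h1 : Interlaces lam ρ) (h2 : Interlaces mu ρ) :
    ∀ j, (reflA lam mu ρ).part j + ρ.part (j+1)
      = min (lam.part j) (mu.part j) + max (lam.part (j+1)) (mu.part (j+1)) := by
  intro j
  rw [reflA_part h1 h2]
  show gpart lam mu ρ j + _ = _
  unfold gpart
  have b1 : ρ.part (j+1) ≤ lam.part j := (h1 j).2
  have b2 : ρ.part (j+1) ≤ mu.part j := (h2 j).2
  simp only [Nat.min_def, Nat.max_def]
  split_ifs <;> omega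

lemma reflC_interlaces {lam mu η : PartitionSeq}
    (h1 : Interlaces η lam) (h2 : Interlaces η mu) :
    Interlaces lam (reflC lam mu η) ∧ Interlaces mu (reflC lam mu η) := by
  have hp := reflC_part h1 h2
  have key : ∀ j, max (lam.part j) (mu.part j) ≤ (reflC lam mu η).part j
      ∧ (reflC lam mu η).part (j+1) ≤ min (lam.part j) (mu.part j) := by
    intro j
    rw [hp]
    match j with
    | 0 =>
      show max (lam.part 0) (mu.part 0) ≤ max (lam.part 0) (mu.part 0)
        ∧ min (lam.part 0) (mu.part 0) + max (lam.part 1) (mu.part 1) - η.part 0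
          ≤ min (lam.part 0) (mu.part 0)
      have a1 : lam.part 1 ≤ η.part 0 := (h1 0).2
      have a2 : mu.part 1 ≤ η.part 0 := (h2 0).2
      simp only [Nat.min_def, Nat.max_def]
      split_ifs <;> omega
    | (j+1) =>
      show max (lam.part (j+1)) (mu.part (j+1))
          ≤ min (lam.part j) (mu.part j) + max (lam.part (j+1)) (mu.part (j+1)) - η.part j
        ∧ min (lam.part (j+1)) (mu.part (j+1)) + max (lam.part (j+2)) (mu.part (j+2))
            - η.part (j+1) ≤ min (lam.part (j+1)) (mu.part (j+1))
      have a1 : η.part j ≤ lam.part j := (h1 j).1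
      have a2 : η.part j ≤ mu.part j := (h2 j).1
      have b1 : lam.part (j+2) ≤ η.part (j+1) := (h1 (j+1)).2
      have b2 : mu.part (j+2) ≤ η.part (j+1) := (h2 (j+1)).2
      simp only [Nat.min_def, Nat.max_def]
      split_ifs <;> omega
  constructor <;> intro j <;> have k1 := (key j).1 <;> have k2 := (key j).2 <;> constructor
  · exact le_trans (le_max_left _ _) k1
  · exact le_trans k2 (min_le_left _ _)
  · exact le_trans (le_max_right _ _) k1
  · exact le_trans k2 (min_le_right _ _)

lemma reflC_part_zero {lam mu η : PartitionSeq}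
    (h1 : Interlaces η lam) (h2 : Interlaces η mu) :
    (reflC lam mu η).part 0 = max (lam.part 0) (mu.part 0) := by
  rw [reflC_part h1 h2]; rfl

lemma reflC_sum {lam mu η : PartitionSeq}
    (h1 : Interlaces η lam) (h2 : Interlaces η mu) :
    ∀ j, η.part j + (reflC lam mu η).part (j+1)
      = min (lam.part j) (mu.part j) + max (lam.part (j+1)) (mu.part (j+1)) := by
  intro j
  rw [reflC_part h1 h2]
  show η.part j + (min (lam.part j) (mu.part j)
      + max (lam.part (j+1)) (mu.part (j+1)) - η.part j) = _
  have a1 : η.part j ≤ lam.part j := (h1 j).1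
  have a2 : η.part j ≤ mu.part j := (h2 j).1
  simp only [Nat.min_def, Nat.max_def]
  split_ifs <;> omega

lemma reflC_reflA {lam mu ρ : PartitionSeq}
    (h1 : Interlaces lam ρ) (h2 : Interlaces mu ρ)
    (h0 : ρ.part 0 = max (lam.part 0) (mu.part 0)) :
    reflC lam mu (reflA lam mu ρ) = ρ := by
  have hp := reflA_part h1 h2
  have key : ∀ j, hpart lam mu (reflA lam mu ρ) j = ρ.part j := by
    intro j
    match j with
    | 0 => exact h0.symm
    | (j+1) =>
      show min (lam.part j) (mu.part j) + max (lam.part (j+1)) (mu.part (j+1))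
          - (reflA lam mu ρ).part j = ρ.part (j+1)
      rw [hp]
      show _ - gpart lam mu ρ j = _
      unfold gpart
      have b1 : ρ.part (j+1) ≤ lam.part j := (h1 j).2
      have b2 : ρ.part (j+1) ≤ mu.part j := (h2 j).2
      simp only [Nat.min_def, Nat.max_def]
      split_ifs <;> omega
  have hanti : ∀ ⦃i j : ℕ⦄, i ≤ j →
      hpart lam mu (reflA lam mu ρ) j ≤ hpart lam mu (reflA lam mu ρ) i := by
    intro i j hij
    rw [key, key]
    exact ρ.antitone' hij
  rw [reflC, dif_pos hanti]
  exact PartitionSeq.ext' key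

lemma reflA_reflC {lam mu η : PartitionSeq}
    (h1 : Interlaces η lam) (h2 : Interlaces η mu) :
    reflA lam mu (reflC lam mu η) = η := by
  have hp := reflC_part h1 h2
  have key : ∀ j, gpart lam mu (reflC lam mu η) j = η.part j := by
    intro j
    show min (lam.part j) (mu.part j) + max (lam.part (j+1)) (mu.part (j+1))
        - (reflC lam mu η).part (j+1) = η.part j
    rw [hp]
    show _ - (min (lam.part j) (mu.part j)
        + max (lam.part (j+1)) (mu.part (j+1)) - η.part j) = _
    have a1 : η.part j ≤ lam.part j := (h1 j).1
    have a2 : η.part j ≤ mu.part j := (h2 j).1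
    simp only [Nat.min_def, Nat.max_def]
    split_ifs <;> omega
  have hanti : ∀ ⦃i j : ℕ⦄, i ≤ j →
      gpart lam mu (reflC lam mu η) j ≤ gpart lam mu (reflC lam mu η) i := by
    intro i j hij
    rw [key, key]
    exact η.antitone' hij
  rw [reflA, dif_pos hanti]
  exact PartitionSeq.ext' key

lemma up_part (ρ : PartitionSeq) :
    (up ρ).part 0 = ρ.part 0 + 1 ∧ ∀ j, j ≠ 0 → (up ρ).part j = ρ.part j := by
  constructor
  · show ρ.part 0 + (if (0:ℕ) = 0 then 1 else 0) = _
    simp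
  · intro j hj
    show ρ.part j + (if j = 0 then 1 else 0) = _
    simp [hj]

open Classical in
noncomputable def down (ρ : PartitionSeq) : PartitionSeq :=
  if h : ρ.part 1 < ρ.part 0 then
    ⟨fun j => if j = 0 then ρ.part 0 - 1 else ρ.part j,
     by
      intro i j hij
      by_cases hj : j = 0
      · subst hj
        have : i = 0 := Nat.le_zero.mp hij
        subst this; exact le_rfl
      · by_cases hi : i = 0
        · subst hi
          have h1 : ρ.part j ≤ ρ.part 1 := ρ.antitone' (by omega)
          simp only [hj, if_false]
          simp only [reduceIte]
          omega
        · simp only [hi, hj, if_false]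
          exact ρ.antitone' hij,
     by
      obtain ⟨K, hK⟩ := ρ.eventually_zero
      exact ⟨K + 1, fun i hi => by
        have h0 : i ≠ 0 := by omega
        simp [h0, hK i (by omega)]⟩⟩
  else ρ

lemma down_part {ρ : PartitionSeq} (h : ρ.part 1 < ρ.part 0) :
    (down ρ).part 0 = ρ.part 0 - 1 ∧ ∀ j, j ≠ 0 → (down ρ).part j = ρ.part j := by
  rw [down, dif_pos h]
  exact ⟨rfl, fun j hj => by simp [hj]⟩

lemma up_down {ρ : PartitionSeq} (h : ρ.part 1 < ρ.part 0) : up (down ρ) = ρ := by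
  refine PartitionSeq.ext' (fun j => ?_)
  by_cases hj : j = 0
  · subst hj
    rw [(up_part _).1, (down_part h).1]
    omega
  · rw [(up_part _).2 j hj, (down_part h).2 j hj]

/-- With `f(N)` the number of partitions `ρ` with `|ρ| = N`, `λ ≺ ρ`,
`μ ≺ ρ`, and `g(M)` the number of partitions `η` with `|η| = M`, `η ≺ λ`, `η ≺ μ`, one
has `f(N) − f(N−1) = g(|λ| + |μ| − N)` for every integer `N`. -/
theorem statement7 (lam mu : PartitionSeq) (N : ℤ) :
    ({ρ : PartitionSeq | (size ρ : ℤ) = N ∧ Interlaces lam ρ ∧ Interlaces mu ρ}.ncard : ℤ)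
      - ({ρ : PartitionSeq | (size ρ : ℤ) = N - 1 ∧ Interlaces lam ρ ∧
            Interlaces mu ρ}.ncard : ℤ)
    = ({η : PartitionSeq | (size η : ℤ) = (size lam : ℤ) + (size mu : ℤ) - N ∧
          Interlaces η lam ∧ Interlaces η mu}.ncard : ℤ) := by
  classical
  set A := {ρ : PartitionSeq | (size ρ : ℤ) = N ∧ Interlaces lam ρ ∧ Interlaces mu ρ} with hA
  set B := {ρ : PartitionSeq | (size ρ : ℤ) = N - 1 ∧ Interlaces lam ρ ∧ Interlaces mu ρ}
    with hB
  set C := {η : PartitionSeq | (size η : ℤ) = (size lam : ℤ) + (size mu : ℤ) - N ∧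
      Interlaces η lam ∧ Interlaces η mu} with hC
  set A2 := {ρ ∈ A | ρ.part 0 = max (lam.part 0) (mu.part 0)} with hA2
  have finA : A.Finite := by
    refine (finite_size N.toNat).subset (fun ρ hρ => ?_)
    have h := hρ.1
    simp only [Set.mem_setOf_eq]
    omega
  have finA2 : A2.Finite := finA.subset (Set.sep_subset _ _)
  have hsplit : (A \ A2).ncard + A2.ncard = A.ncard :=
    Set.ncard_diff_add_ncard_of_subset (Set.sep_subset _ _) finA
  -- A \ A2 = up '' B
  have hdiff : A \ A2 = up '' B := by
    ext ρ
    constructor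
    · rintro ⟨hρA, hni⟩
      obtain ⟨hs, hil, him⟩ := hρA
      have hne : ρ.part 0 ≠ max (lam.part 0) (mu.part 0) := fun h => hni ⟨⟨hs, hil, him⟩, h⟩
      have hgt : max (lam.part 0) (mu.part 0) < ρ.part 0 :=
        lt_of_le_of_ne (max_le (hil 0).1 (him 0).1) (Ne.symm hne)
      have hd : ρ.part 1 < ρ.part 0 :=
        lt_of_le_of_lt (le_trans (hil 0).2 (le_trans (le_max_left _ _) le_rfl)) hgt
      have hud : up (down ρ) = ρ := up_down hd
      have hsz : size (down ρ) + 1 = size ρ := by rw [← size_up, hud]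
      refine ⟨down ρ, ⟨?_, ?_, ?_⟩, hud⟩
      · omega
      · intro j
        by_cases hj : j = 0
        · subst hj
          rw [(down_part hd).1, (down_part hd).2 1 one_ne_zero]
          have h1 : lam.part 0 ≤ ρ.part 0 := (hil 0).1
          have h2 : ρ.part 1 ≤ lam.part 0 := (hil 0).2
          constructor <;> omega
        · rw [(down_part hd).2 j hj, (down_part hd).2 (j+1) (by omega)]
          exact hil j
      · intro j
        by_cases hj : j = 0
        · subst hj
          rw [(down_part hd).1, (down_part hd).2 1 one_ne_zero]
          have h1 : mu.part 0 ≤ ρ.part 0 := (him 0).1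
          have h2 : ρ.part 1 ≤ mu.part 0 := (him 0).2
          constructor <;> omega
        · rw [(down_part hd).2 j hj, (down_part hd).2 (j+1) (by omega)]
          exact him j
    · rintro ⟨b, ⟨hs, hil, him⟩, rfl⟩
      have hup := up_part b
      have hilu : Interlaces lam (up b) := by
        intro j
        by_cases hj : j = 0
        · subst hj
          rw [hup.1, hup.2 1 one_ne_zero]
          have h1 : lam.part 0 ≤ b.part 0 := (hil 0).1
          have h2 : b.part 1 ≤ lam.part 0 := (hil 0).2
          constructor <;> omega
        · rw [hup.2 j hj, hup.2 (j+1) (by omega)]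
          exact hil j
      have himu : Interlaces mu (up b) := by
        intro j
        by_cases hj : j = 0
        · subst hj
          rw [hup.1, hup.2 1 one_ne_zero]
          have h1 : mu.part 0 ≤ b.part 0 := (him 0).1
          have h2 : b.part 1 ≤ mu.part 0 := (him 0).2
          constructor <;> omega
        · rw [hup.2 j hj, hup.2 (j+1) (by omega)]
          exact him j
      have hszu : size (up b) = size b + 1 := size_up b
      refine ⟨⟨?_, hilu, himu⟩, ?_⟩
      · omega
      · rintro ⟨-, heq⟩
        rw [hup.1] at heq
        have h1 := (hil 0).1
        have h2 := (him 0).1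
        omega
  -- C = reflA '' A2
  have hCim : C = reflA lam mu '' A2 := by
    ext η
    constructor
    · rintro ⟨hs, h1, h2⟩
      refine ⟨reflC lam mu η, ⟨⟨?_, (reflC_interlaces h1 h2).1, (reflC_interlaces h1 h2).2⟩,
        reflC_part_zero h1 h2⟩, reflA_reflC h1 h2⟩
      have hsz := size_pair (reflC_part_zero h1 h2) (reflC_sum h1 h2)
      omega
    · rintro ⟨ρ, ⟨⟨hs, hil, him⟩, h0⟩, rfl⟩
      have hsz := size_pair h0 (reflA_sum hil him)
      exact ⟨by omega, (reflA_interlaces hil him).1, (reflA_interlaces hil him).2⟩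
  have hinj : Set.InjOn (reflA lam mu) A2 := by
    rintro a ⟨⟨-, ha1, ha2⟩, ha0⟩ b ⟨⟨-, hb1, hb2⟩, hb0⟩ h
    rw [← reflC_reflA ha1 ha2 ha0, h, reflC_reflA hb1 hb2 hb0]
  have e1 : (A \ A2).ncard = B.ncard := by
    rw [hdiff, Set.ncard_image_of_injective _ up_injective]
  have e2 : C.ncard = A2.ncard := by
    rw [hCim, Set.ncard_image_of_injOn hinj]
  omega
end

section
/- Fix a positive integer n. For an edge sequence f: ℤ → {+1,−1} (i.e. f(t) = +1 for t sufficiently negative and f(t) = −1 for t sufficiently positive), define f_i(t) = f(nt + i) for 0 ≤ i ≤ n−1. Then each f_i is an edge sequence, the map f ↦ (f_0, …, f_{n−1}) is a bijection from the set of edge sequences onto the set of n-tuples of edge sequences, and the charge of f equals the sum of the charges of f_0, …, f_{n−1}; in particular, if f has charge zero then the charges of the f_i sum to zero. -/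
/-- An edge sequence: a `{±1}`-valued function on `ℤ` equal to `+1` near `−∞` and to
`−1` near `+∞`. -/
def IsEdgeSeq (f : ℤ → ℤ) : Prop :=
  (∀ t : ℤ, f t = 1 ∨ f t = -1) ∧
  (∃ A : ℤ, ∀ t : ℤ, t < A → f t = 1) ∧
  (∃ B : ℤ, ∀ t : ℤ, B < t → f t = -1)

/-- The charge of an edge sequence: `#{t ≥ 0 : f(t) = +1} − #{t < 0 : f(t) = −1}`. -/
noncomputable def charge (f : ℤ → ℤ) : ℤ :=
  ({t : ℤ | 0 ≤ t ∧ f t = 1}.ncard : ℤ) - ({t : ℤ | t < 0 ∧ f t = -1}.ncard : ℤ)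

/-- The `n`-tuple `(f_0, …, f_{n−1})` associated to `f`, where `f_i(t) = f(nt + i)`. -/
def quotientSeq (n : ℕ) (f : ℤ → ℤ) : Fin n → ℤ → ℤ :=
  fun i t => f ((n : ℤ) * t + (i : ℤ))

lemma dm (n : ℕ) (hn : 0 < n) (t i : ℤ) (h0 : 0 ≤ i) (h1 : i < n) :
    ((n:ℤ) * t + i) / n = t ∧ ((n:ℤ) * t + i) % n = i := by
  have hne : (n:ℤ) ≠ 0 := by exact_mod_cast hn.ne'
  constructor
  · rw [add_comm, Int.add_mul_ediv_left i t hne, Int.ediv_eq_zero_of_lt h0 h1, zero_add]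
  · rw [add_comm, Int.add_mul_emod_self_left, Int.emod_eq_of_lt h0 h1]

-- part 1
lemma part1 (n : ℕ) (hn : 0 < n) (f : ℤ → ℤ) (hf : IsEdgeSeq f) (i : Fin n) :
    IsEdgeSeq (quotientSeq n f i) := by
  obtain ⟨hpm, ⟨A, hA⟩, ⟨B, hB⟩⟩ := hf
  have hn' : (0:ℤ) < n := by exact_mod_cast hn
  have hi0 : (0:ℤ) ≤ (i:ℤ) := by positivity
  have hi1 : (i:ℤ) < n := by exact_mod_cast i.isLt
  refine ⟨fun t => hpm _, ⟨min A 0 - n, fun t ht => ?_⟩, ⟨max B 0 + 1, fun t ht => ?_⟩⟩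
  · apply hA
    have ht0 : t < 0 := by omega
    have : (n:ℤ) * t ≤ t := by nlinarith
    omega
  · apply hB
    have ht0 : 1 ≤ t := by omega
    have : t ≤ (n:ℤ) * t := by nlinarith
    omega

-- part 2: inverse map
noncomputable def inv2 (n : ℕ) (hn : 0 < n) (g : Fin n → ℤ → ℤ) : ℤ → ℤ :=
  fun s => g ⟨(s % n).toNat, by
    have hn' : (0:ℤ) < n := by exact_mod_cast hn
    have h1 := Int.emod_nonneg s hn'.ne'
    have h2 := Int.emod_lt_of_pos s hn'
    omega⟩ (s / n)

lemma quot_inv2 (n : ℕ) (hn : 0 < n) (g : Fin n → ℤ → ℤ) :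
    quotientSeq n (inv2 n hn g) = g := by
  funext i t
  have hi0 : (0:ℤ) ≤ (i:ℤ) := by positivity
  have hi1 : (i:ℤ) < n := by exact_mod_cast i.isLt
  obtain ⟨hd, hm⟩ := dm n hn t i hi0 hi1
  simp only [quotientSeq, inv2, hd, hm]
  congr 1

lemma inj2 (n : ℕ) (hn : 0 < n) (f f' : ℤ → ℤ)
    (h : quotientSeq n f = quotientSeq n f') : f = f' := by
  funext s
  have hn' : (0:ℤ) < n := by exact_mod_cast hn
  have h1 := Int.emod_nonneg s hn'.ne'
  have h2 := Int.emod_lt_of_pos s hn'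
  set i : Fin n := ⟨(s % n).toNat, by omega⟩ with hi
  have hiv : ((i:ℕ) : ℤ) = s % n := by simp [hi]; omega
  have key := congrFun (congrFun h i) (s / n)
  simp only [quotientSeq, hiv] at key
  rwa [Int.mul_ediv_add_emod s n] at key

lemma inv2_edge (n : ℕ) (hn : 0 < n) (g : Fin n → ℤ → ℤ)
    (hg : ∀ i : Fin n, IsEdgeSeq (g i)) : IsEdgeSeq (inv2 n hn g) := by
  have hn' : (0:ℤ) < n := by exact_mod_cast hn
  choose A hA using fun i => (hg i).2.1
  choose B hB using fun i => (hg i).2.2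
  have hne : (Finset.univ : Finset (Fin n)).Nonempty := Finset.univ_nonempty_iff.mpr
    ⟨⟨0, hn⟩⟩
  refine ⟨fun t => (hg _).1 _,
    ⟨(Finset.univ.inf' hne A) * n, fun s hs => ?_⟩,
    ⟨(Finset.univ.sup' hne B + 1) * n - 1, fun s hs => ?_⟩⟩
  · apply hA
    have h1 : s / n < Finset.univ.inf' hne A :=
      (Int.ediv_lt_iff_lt_mul hn').mpr hs
    exact lt_of_lt_of_le h1 (Finset.inf'_le _ (Finset.mem_univ _))
  · apply hB
    have h1 : Finset.univ.sup' hne B + 1 ≤ s / n :=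
      (Int.le_ediv_iff_mul_le hn').mpr (by omega)
    have h2 := Finset.le_sup' B (Finset.mem_univ (⟨(s % n).toNat, by
      have := Int.emod_nonneg s hn'.ne'
      have := Int.emod_lt_of_pos s hn'
      omega⟩ : Fin n))
    omega
open Classical in
lemma window (f : ℤ → ℤ) (hpm : ∀ t, f t = 1 ∨ f t = -1) (a b : ℤ)
    (ha : a ≤ 0) (hb : 0 ≤ b) (hA : ∀ t, t < a → f t = 1) (hB : ∀ t, b < t → f t = -1) :
    2 * charge f = (∑ t ∈ Finset.Icc a b, f t) + b + 1 + a := by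
  have key : ∀ s : Finset ℤ, ∑ t ∈ s, f t
      = 2 * ((s.filter (fun t => f t = 1)).card : ℤ) - (s.card : ℤ) := by
    intro s
    rw [← Finset.sum_filter_add_sum_filter_not s (fun t => f t = 1)]
    have h1 : ∑ t ∈ s.filter (fun t => f t = 1), f t
        = ((s.filter (fun t => f t = 1)).card : ℤ) := by
      rw [Finset.sum_congr rfl (fun t ht => (Finset.mem_filter.mp ht).2),
        Finset.sum_const, nsmul_eq_mul, mul_one]
    have h2 : ∑ t ∈ s.filter (fun t => ¬ f t = 1), f t
        = -((s.filter (fun t => ¬ f t = 1)).card : ℤ) := by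
      rw [Finset.sum_congr rfl (fun t ht => ?_), Finset.sum_const, nsmul_eq_mul, mul_neg_one]
      rcases hpm t with h | h
      · exact absurd h (Finset.mem_filter.mp ht).2
      · exact h
    have h3 := Finset.card_filter_add_card_filter_not (s := s) (fun t => f t = 1)
    rw [h1, h2]
    have h3' : ((s.filter (fun t => f t = 1)).card : ℤ)
        + ((s.filter (fun t => ¬ f t = 1)).card : ℤ) = (s.card : ℤ) := by exact_mod_cast h3
    linarith
  have hP : {t : ℤ | 0 ≤ t ∧ f t = 1}
      = ↑((Finset.Icc 0 b).filter (fun t => f t = 1)) := by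
    ext t
    simp only [Set.mem_setOf_eq, Finset.coe_filter, Finset.mem_Icc]
    constructor
    · rintro ⟨h0, h1⟩
      refine ⟨⟨h0, ?_⟩, h1⟩
      by_contra hc
      have := hB t (by omega)
      omega
    · rintro ⟨⟨h0, _⟩, h1⟩; exact ⟨h0, h1⟩
  have hN : {t : ℤ | t < 0 ∧ f t = -1}
      = ↑((Finset.Icc a (-1)).filter (fun t => f t = -1)) := by
    ext t
    simp only [Set.mem_setOf_eq, Finset.coe_filter, Finset.mem_Icc]
    constructor
    · rintro ⟨h0, h1⟩
      refine ⟨⟨?_, by omega⟩, h1⟩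
      by_contra hc
      have := hA t (by omega)
      omega
    · rintro ⟨⟨_, h0⟩, h1⟩; exact ⟨by omega, h1⟩
  have hsplit : Finset.Icc a (-1) ∪ Finset.Icc 0 b = Finset.Icc a b := by
    ext t; simp only [Finset.mem_union, Finset.mem_Icc]; omega
  have hdisj : Disjoint (Finset.Icc a (-1)) (Finset.Icc 0 b) := by
    rw [Finset.disjoint_left]
    intro t h1 h2
    simp only [Finset.mem_Icc] at h1 h2
    omega
  have hsum : ∑ t ∈ Finset.Icc a b, f t
      = ∑ t ∈ Finset.Icc a (-1), f t + ∑ t ∈ Finset.Icc 0 b, f t := by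
    rw [← hsplit, Finset.sum_union hdisj]
  -- cardinalities of the Iccs
  have hcP : ((Finset.Icc (0:ℤ) b).card : ℤ) = b + 1 := by
    rw [Int.card_Icc]; omega
  have hcN : ((Finset.Icc a (-1:ℤ)).card : ℤ) = -a := by
    rw [Int.card_Icc]; omega
  -- relate negative filter card
  have hNcard : ((Finset.Icc a (-1)).filter (fun t => f t = -1)).card
      = ((Finset.Icc a (-1)).filter (fun t => ¬ f t = 1)).card := by
    congr 1
    apply Finset.filter_congr
    intro t _
    rcases hpm t with h | h <;> simp [h]
  have e1 := key (Finset.Icc 0 b)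
  have e2 := key (Finset.Icc a (-1))
  have e3 := Finset.card_filter_add_card_filter_not
    (s := Finset.Icc a (-1)) (fun t => f t = 1)
  unfold charge
  rw [hP, hN, Set.ncard_coe_finset, Set.ncard_coe_finset, hNcard]
  have e3' : ((Finset.Icc a (-1)).filter (fun t => f t = 1)).card
      + ((Finset.Icc a (-1)).filter (fun t => ¬ f t = 1)).card
      = (Finset.Icc a (-1)).card := e3
  have := hsum
  push_cast at e3' ⊢
  omega

lemma part3 (n : ℕ) (hn : 0 < n) (f : ℤ → ℤ) (hf : IsEdgeSeq f) :
    charge f = ∑ i : Fin n, charge (quotientSeq n f i) := by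
  obtain ⟨hpm, ⟨A, hA⟩, ⟨B, hB⟩⟩ := hf
  have hn' : (0:ℤ) < n := by exact_mod_cast hn
  set a : ℤ := min A 0 with ha
  set b : ℤ := max B 0 with hb
  have hA' : ∀ t, t < a → f t = 1 := fun t ht => hA t (by omega)
  have hB' : ∀ t, b < t → f t = -1 := fun t ht => hB t (by omega)
  set K : ℤ := b - a with hK
  have hK0 : 0 ≤ K := by omega
  have hnK : K ≤ (n:ℤ) * K := by nlinarith
  have hKa : -a ≤ (n:ℤ) * K := by omega
  have hKb : b ≤ (n:ℤ) * K := by omega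
  -- window for f
  have hbig := window f hpm (-((n:ℤ)*K)) ((n:ℤ)*K + n - 1) (by omega) (by omega)
    (fun t ht => hA' t (by omega)) (fun t ht => hB' t (by omega))
  -- window for each f_i
  have hsmall : ∀ i : Fin n, 2 * charge (quotientSeq n f i)
      = (∑ t ∈ Finset.Icc (-K) K, f ((n:ℤ)*t + i)) + 1 := by
    intro i
    have hi0 : (0:ℤ) ≤ (i:ℤ) := by positivity
    have hi1 : (i:ℤ) < n := by exact_mod_cast i.isLt
    have := window (quotientSeq n f i) (fun t => hpm _) (-K) K (by omega) hK0
      (fun t ht => hA' _ ?_) (fun t ht => hB' _ ?_)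
    · rw [this]; simp only [quotientSeq]; ring
    · -- n*t + i < a when t < -K
      have h1 : (n:ℤ) * t ≤ (n:ℤ) * (-K - 1) := by
        apply mul_le_mul_of_nonneg_left (by omega) (by omega)
      nlinarith
    · have h1 : (n:ℤ) * (K + 1) ≤ (n:ℤ) * t := by
        apply mul_le_mul_of_nonneg_left (by omega) (by omega)
      nlinarith
  -- reindex the big sum
  have hreindex : ∑ s ∈ Finset.Icc (-((n:ℤ)*K)) ((n:ℤ)*K + n - 1), f s
      = ∑ t ∈ Finset.Icc (-K) K, ∑ i ∈ Finset.range n, f ((n:ℤ)*t + i) := by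
    rw [← Finset.sum_product' (Finset.Icc (-K) K) (Finset.range n)
      (fun t i => f ((n:ℤ)*t + i))]
    refine Finset.sum_nbij' (fun s => (s / n, (s % n).toNat))
      (fun p => (n:ℤ) * p.1 + p.2) ?_ ?_ ?_ ?_ ?_
    · intro s hs
      simp only [Finset.mem_Icc] at hs
      have h1 : -K ≤ s / n := (Int.le_ediv_iff_mul_le hn').mpr
        (by have : -K * (n:ℤ) = -((n:ℤ)*K) := by ring
            omega)
      have h2 : s / n < K + 1 := (Int.ediv_lt_iff_lt_mul hn').mpr (by nlinarith [hs.2])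
      have h3 := Int.emod_nonneg s hn'.ne'
      have h4 := Int.emod_lt_of_pos s hn'
      simp only [Finset.mem_product, Finset.mem_Icc, Finset.mem_range]
      exact ⟨⟨h1, by omega⟩, by omega⟩
    · intro p hp
      simp only [Finset.mem_product, Finset.mem_Icc, Finset.mem_range] at hp
      obtain ⟨⟨h1, h2⟩, h3⟩ := hp
      have hp2 : ((p.2:ℤ)) < n := by exact_mod_cast h3
      have hp0 : (0:ℤ) ≤ p.2 := by positivity
      have hl : (n:ℤ) * (-K) ≤ (n:ℤ) * p.1 := mul_le_mul_of_nonneg_left h1 (by omega)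
      have hr : (n:ℤ) * p.1 ≤ (n:ℤ) * K := mul_le_mul_of_nonneg_left h2 (by omega)
      simp only [Finset.mem_Icc]
      constructor <;> nlinarith
    · intro s _
      simp only
      have h3 := Int.emod_nonneg s hn'.ne'
      have h4 := Int.emod_lt_of_pos s hn'
      have : (((s % n).toNat : ℕ) : ℤ) = s % n := by omega
      rw [this, Int.mul_ediv_add_emod s n]
    · intro p hp
      simp only [Finset.mem_product, Finset.mem_Icc, Finset.mem_range] at hp
      obtain ⟨⟨h1, h2⟩, h3⟩ := hp
      have hp2 : ((p.2:ℤ)) < n := by exact_mod_cast h3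
      have hp0 : (0:ℤ) ≤ p.2 := by positivity
      obtain ⟨hd, hm⟩ := dm n hn p.1 p.2 hp0 hp2
      simp only [hd, hm]
      ext <;> simp
    · intro s _
      simp only
      have h3 := Int.emod_nonneg s hn'.ne'
      have h4 := Int.emod_lt_of_pos s hn'
      have : (((s % n).toNat : ℕ) : ℤ) = s % n := by omega
      rw [this, Int.mul_ediv_add_emod s n]
  -- sum over i ∈ range n vs i : Fin n
  have hswap : ∑ t ∈ Finset.Icc (-K) K, ∑ i ∈ Finset.range n, f ((n:ℤ)*t + i)
      = ∑ i : Fin n, ∑ t ∈ Finset.Icc (-K) K, f ((n:ℤ)*t + i) := by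
    rw [Finset.sum_comm, Finset.sum_range fun i => ∑ t ∈ Finset.Icc (-K) K, f ((n:ℤ)*t + i)]
  have hsum2 : ∑ i : Fin n, 2 * charge (quotientSeq n f i)
      = (∑ i : Fin n, ∑ t ∈ Finset.Icc (-K) K, f ((n:ℤ)*t + i)) + n := by
    rw [Finset.sum_congr rfl (fun i _ => hsmall i), Finset.sum_add_distrib]
    simp [mul_comm]
  have goal2 : 2 * charge f = 2 * ∑ i : Fin n, charge (quotientSeq n f i) := by
    rw [Finset.mul_sum] at *
    rw [hbig, hreindex, hswap]
    rw [← Finset.mul_sum] at hsum2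
    rw [Finset.mul_sum] at hsum2
    omega
  omega

/-- For a positive integer `n`: each `f_i` of an edge sequence `f` is
an edge sequence; `f ↦ (f_0, …, f_{n−1})` is a bijection from edge sequences onto
`n`-tuples of edge sequences; and the charge of `f` is the sum of the charges of the
`f_i` — in particular, if `f` has charge zero then the charges of the `f_i` sum to
zero. -/
theorem statement13 (n : ℕ) (hn : 0 < n) :
    (∀ f : ℤ → ℤ, IsEdgeSeq f → ∀ i : Fin n, IsEdgeSeq (quotientSeq n f i)) ∧
    Set.BijOn (quotientSeq n) {f : ℤ → ℤ | IsEdgeSeq f}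
      {g : Fin n → ℤ → ℤ | ∀ i : Fin n, IsEdgeSeq (g i)} ∧
    (∀ f : ℤ → ℤ, IsEdgeSeq f → charge f = ∑ i : Fin n, charge (quotientSeq n f i)) ∧
    (∀ f : ℤ → ℤ, IsEdgeSeq f → charge f = 0 →
      ∑ i : Fin n, charge (quotientSeq n f i) = 0) := by
  refine ⟨part1 n hn, ⟨?_, ?_, ?_⟩, part3 n hn, fun f hf h0 => by
    rw [← part3 n hn f hf, h0]⟩
  · intro f hf i
    exact part1 n hn f hf i
  · intro f _ f' _ h
    exact inj2 n hn f f' h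
  · intro g hg
    exact ⟨inv2 n hn g, inv2_edge n hn g hg, quot_inv2 n hn g⟩
end
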